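/- Let Ω ⊂ ℝ^d be a bounded domain, T > 0, n ∈ ℕ, π_1, …, π_n > 0, η > 0, and let h(u) = Σ_{i=1}^n π_i(u_i(log u_i − 1) + 1) and s(x) = x/(1 + x^{1/2+η}) for x ≥ 0. Then there exists a constant C > 0, depending only on Ω, T, n, π, and η, such that for every measurable u : Ω × (0,T) → (0,∞)ⁿ with h(u) ∈ L¹(Ω × (0,T)): (i) { ∫₀ᵀ Σ_{i=1}^n ( ∫_Ω π_i s(u_i(x,t)) log u_i(x,t) dx )² dt }^{1/2} ≤ C (1 + ∫₀ᵀ ∫_Ω h(u(x,t)) dx dt), and (ii) ∫₀ᵀ Σ_{i=1}^n ∫_Ω π_i s(u_i(x,t))² / u_i(x,t) dx dt ≤ C. -/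

import Mathlib

set_option maxHeartbeats 2000000


open MeasureTheory
open scoped ENNReal

lemma aux_ell_nonneg {x : ℝ} (hx : 0 < x) : 0 ≤ x * (Real.log x - 1) + 1 := by
  have h1 : Real.log x⁻¹ ≤ x⁻¹ - 1 := Real.log_le_sub_one_of_pos (by positivity)
  rw [Real.log_inv] at h1
  have h2 : x * (-Real.log x) ≤ x * (x⁻¹ - 1) := by
    exact mul_le_mul_of_nonneg_left h1 hx.le
  have h3 : x * x⁻¹ = 1 := mul_inv_cancel₀ hx.ne'
  nlinarith

lemma aux_sq_bound {η : ℝ} (hη : 0 < η) {x : ℝ} (hx : 0 < x) :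
    (x / (1 + x ^ ((1:ℝ)/2 + η)) * Real.log x) ^ 2
      ≤ (1 + Real.exp 2 / η) + (1/η) * (x * (Real.log x - 1) + 1) := by
  set c : ℝ := (1:ℝ)/2 + η with hc
  have hxc : 0 < x ^ c := Real.rpow_pos_of_pos hx c
  have hden : (0:ℝ) < 1 + x ^ c := by positivity
  have hells := aux_ell_nonneg hx
  have hB : 0 ≤ (1/η) * (x * (Real.log x - 1) + 1) := by positivity
  rcases le_or_gt x 1 with h1 | h1
  · -- small x : s ≤ x, |x log x| ≤ 1
    have hs_le : x / (1 + x ^ c) ≤ x := div_le_self hx.le (by linarith)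
    have hs_nonneg : 0 ≤ x / (1 + x ^ c) := by positivity
    have hlog : Real.log x ≤ 0 := Real.log_nonpos hx.le h1
    have hkey : x * (-Real.log x) ≤ 1 := by
      have h2 : Real.log x⁻¹ ≤ x⁻¹ - 1 := Real.log_le_sub_one_of_pos (by positivity)
      rw [Real.log_inv] at h2
      have h3 : x * (-Real.log x) ≤ x * (x⁻¹ - 1) := mul_le_mul_of_nonneg_left h2 hx.le
      have h4 : x * x⁻¹ = 1 := mul_inv_cancel₀ hx.ne'
      nlinarith
    have hxl_nonneg : 0 ≤ x * (-Real.log x) := mul_nonneg hx.le (by linarith)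
    have hsq : (x / (1 + x ^ c) * Real.log x) ^ 2 ≤ (x * Real.log x) ^ 2 := by
      have habs : (x / (1 + x ^ c)) * (-Real.log x) ≤ x * (-Real.log x) :=
        mul_le_mul_of_nonneg_right hs_le (by linarith)
      nlinarith [mul_nonneg hs_nonneg (neg_nonneg.2 hlog)]
    have h5 : (x * Real.log x) ^ 2 ≤ 1 := by nlinarith
    have h6 : (1:ℝ) ≤ 1 + Real.exp 2 / η := le_add_of_nonneg_right (by positivity)
    linarith
  · -- large x
    have hx1 : (1:ℝ) ≤ x := h1.le
    have hlog : 0 ≤ Real.log x := Real.log_nonneg hx1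
    -- s ≤ x^(1-c)
    have hs_le : x / (1 + x ^ c) ≤ x ^ ((1:ℝ) - c) := by
      have : x / (1 + x ^ c) ≤ x / x ^ c :=
        div_le_div_of_nonneg_left hx.le hxc (by linarith)
      calc x / (1 + x ^ c) ≤ x / x ^ c := this
        _ = x ^ ((1:ℝ) - c) := by
            rw [Real.rpow_sub hx, Real.rpow_one]
    have hs_nonneg : 0 ≤ x / (1 + x ^ c) := by positivity
    have h1c : 0 ≤ x ^ ((1:ℝ) - c) := (Real.rpow_pos_of_pos hx _).le
    -- (s log)^2 ≤ x^(1-2η) log^2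
    set z : ℝ := x ^ ((1:ℝ) - 2*η) with hz
    have hz_nonneg : 0 ≤ z := (Real.rpow_pos_of_pos hx _).le
    have hzz : x ^ ((1:ℝ) - c) * x ^ ((1:ℝ) - c) = z := by
      rw [← Real.rpow_add hx, hz, hc]; ring_nf
    have hsq : (x / (1 + x ^ c) * Real.log x) ^ 2 ≤ z * Real.log x ^ 2 := by
      have := mul_le_mul hs_le hs_le hs_nonneg h1c
      nlinarith [mul_nonneg (mul_nonneg hs_nonneg hs_nonneg) (sq_nonneg (Real.log x)),
        sq_nonneg (Real.log x)]
    -- log x ≤ x^(2η)/(2η)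
    set y : ℝ := x ^ (2*η) with hy
    have hy_pos : 0 < y := Real.rpow_pos_of_pos hx _
    have hlogy : 2*η * Real.log x ≤ y := by
      have := Real.log_le_sub_one_of_pos hy_pos
      rw [hy, Real.log_rpow hx] at this
      linarith
    have hzy : z * y = x := by
      rw [hz, hy, ← Real.rpow_add hx, show (1 - 2*η) + 2*η = (1:ℝ) by ring, Real.rpow_one]
    -- z log^2 ≤ x log x / (2η)
    have hkey : z * Real.log x ^ 2 * (2*η) ≤ x * Real.log x := by
      nlinarith [mul_le_mul_of_nonneg_left hlogy (mul_nonneg hz_nonneg hlog)]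
    -- x log x ≤ 2 e^2 + 2 ℓ(x)
    have hxlog : x * Real.log x ≤ 2 * Real.exp 2 + 2 * (x * (Real.log x - 1) + 1) := by
      rcases le_or_gt (Real.log x) 2 with h2 | h2
      · have hxe : x ≤ Real.exp 2 := by
          calc x = Real.exp (Real.log x) := (Real.exp_log hx).symm
            _ ≤ Real.exp 2 := Real.exp_le_exp.2 h2
        nlinarith
      · nlinarith [mul_le_mul_of_nonneg_left h2.le hx.le, (Real.exp_pos 2).le]
    have hη2 : 0 < 2*η := by linarith
    calc (x / (1 + x ^ c) * Real.log x) ^ 2 ≤ z * Real.log x ^ 2 := hsq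
      _ ≤ (x * Real.log x) / (2*η) := by
          rw [le_div_iff₀ hη2]; linarith
      _ ≤ (2 * Real.exp 2 + 2 * (x * (Real.log x - 1) + 1)) / (2*η) := by
          gcongr
      _ = Real.exp 2 / η + (1/η) * (x * (Real.log x - 1) + 1) := by
          rw [div_eq_mul_inv, mul_inv, div_eq_mul_inv, one_div]; ring
      _ ≤ (1 + Real.exp 2 / η) + (1/η) * (x * (Real.log x - 1) + 1) := by linarith

lemma aux_s_sq_div {η : ℝ} (hη : 0 < η) {x : ℝ} (hx : 0 < x) :
    (x / (1 + x ^ ((1:ℝ)/2 + η))) ^ 2 / x ≤ 1 := by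
  set c : ℝ := (1:ℝ)/2 + η with hc
  have hxc : 0 < x ^ c := Real.rpow_pos_of_pos hx c
  have hden : (0:ℝ) < 1 + x ^ c := by positivity
  have hkey : x ≤ (1 + x ^ c) ^ 2 := by
    rcases le_or_gt x 1 with h1 | h1
    · nlinarith
    · have hx1 : (1:ℝ) ≤ x := h1.le
      have h2 : x ^ (1:ℝ) ≤ x ^ (2*c) := Real.rpow_le_rpow_of_exponent_le hx1 (by rw [hc]; linarith)
      have h3 : x ^ c * x ^ c = x ^ (2*c) := by rw [← Real.rpow_add hx]; ring_nf
      rw [Real.rpow_one] at h2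
      nlinarith
  rw [div_le_one hx, div_pow, div_le_iff₀ (by positivity)]
  nlinarith [sq_nonneg x]

lemma aux_sqrt_le (x : ℝ) (hx : 0 ≤ x) : Real.sqrt x ≤ 1 + x := by
  nlinarith [Real.sq_sqrt hx, Real.sqrt_nonneg x]

lemma aux_cs {α : Type*} [MeasurableSpace α] (μ : Measure α) [IsFiniteMeasure μ] {f : α → ℝ}
    (h1 : Integrable f μ) (h2 : Integrable (fun x => f x ^ 2) μ) :
    (∫ x, f x ∂μ) ^ 2 ≤ (μ Set.univ).toReal * ∫ x, f x ^ 2 ∂μ := by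
  set V := (μ Set.univ).toReal with hV
  set I := ∫ x, f x ∂μ with hI
  set J := ∫ x, f x ^ 2 ∂μ with hJ
  have hV0 : 0 ≤ V := ENNReal.toReal_nonneg
  rcases eq_or_lt_of_le hV0 with hV0' | hV0'
  · -- V = 0 ⇒ μ = 0
    have hμ : μ = 0 := by
      have : μ Set.univ = 0 := by
        have := (measure_lt_top μ Set.univ).ne
        rcases ENNReal.toReal_eq_zero_iff (μ Set.univ) |>.1 hV0'.symm with h | h
        · exact h
        · exact absurd h this
      exact Measure.measure_univ_eq_zero.1 this
    have hI0 : I = 0 := by rw [hI, hμ, integral_zero_measure]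
    have hJ0 : J = 0 := by rw [hJ, hμ, integral_zero_measure]
    simp [hI0, hJ0, ← hV0']
  · have key : 0 ≤ ∫ x, (V * f x - I) ^ 2 ∂μ := integral_nonneg fun x => sq_nonneg _
    have expand : ∫ x, (V * f x - I) ^ 2 ∂μ = V^2 * J - (2*V*I) * I + V * I^2 := by
      have heq : ∀ x, (V * f x - I) ^ 2 = V^2 * f x ^ 2 - (2*V*I) * f x + I^2 := fun x => by ring
      simp_rw [heq]
      have hsub : Integrable (fun x => V^2 * f x ^ 2 - (2*V*I) * f x) μ :=
        (h2.const_mul _).sub (h1.const_mul _)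
      rw [integral_add hsub (integrable_const _),
        integral_sub (h2.const_mul _) (h1.const_mul _), MeasureTheory.integral_const_mul, MeasureTheory.integral_const_mul,
        integral_const, smul_eq_mul, measureReal_def]
    rw [expand] at key
    have : V * I ^ 2 ≤ V * (V * J) := by nlinarith
    exact (mul_le_mul_iff_right₀ hV0').1 this

lemma aux_combine {pi P Q A B sq ell S : ℝ} (hpi : 0 < pi) (hpiP : pi ≤ P) (hP1 : 1 ≤ P)
    (hQ1 : 1 ≤ Q) (hA0 : 0 < A) (hB0 : 0 < B) (hell : 0 ≤ ell) (hS0 : 0 ≤ S)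
    (hsingle : pi * ell ≤ S) (hb : sq ≤ A + B * ell) :
    pi ^ 2 * sq ≤ P ^ 2 * A + P ^ 2 * B * Q * S := by
  have h1 : pi^2 * sq ≤ pi^2 * (A + B*ell) := mul_le_mul_of_nonneg_left hb (sq_nonneg _)
  have h2 : pi^2 ≤ P^2 := by nlinarith
  have h3 : pi^2*A ≤ P^2*A := mul_le_mul_of_nonneg_right h2 hA0.le
  have h5 : (pi*B)*(pi*ell) ≤ (pi*B)*S :=
    mul_le_mul_of_nonneg_left hsingle (mul_nonneg hpi.le hB0.le)
  have h6a : pi*B ≤ P*B := mul_le_mul_of_nonneg_right hpiP hB0.le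
  have hPP : P ≤ P^2 := by nlinarith
  have h6b : P*B ≤ P^2*B := mul_le_mul_of_nonneg_right hPP hB0.le
  have h6c : P^2*B ≤ P^2*B*Q :=
    le_mul_of_one_le_right (mul_nonneg (pow_nonneg (by linarith) 2) hB0.le) hQ1
  have h7 : (pi*B)*S ≤ (P^2*B*Q)*S := mul_le_mul_of_nonneg_right (by linarith) hS0
  have e : pi^2*(A+B*ell) = pi^2*A + (pi*B)*(pi*ell) := by ring
  linarith
/-- Let `Ω ⊂ ℝ^d` be a bounded domain, `T > 0`, `π_i > 0`, `η > 0`, let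
`h(u) = Σ_i π_i(u_i(log u_i − 1) + 1)` and `s(x) = x/(1 + x^{1/2+η})`.  Then there is a
constant `C > 0`, depending only on `Ω, T, n, π, η`, such that for every measurable
`u : Ω × (0,T) → (0,∞)ⁿ` with `h(u) ∈ L¹(Ω × (0,T))`:
(i) `{∫₀ᵀ Σ_i (∫_Ω π_i s(u_i) log u_i dx)² dt}^{1/2} ≤ C (1 + ∫₀ᵀ∫_Ω h(u) dx dt)`, and
(ii) `∫₀ᵀ Σ_i ∫_Ω π_i s(u_i)²/u_i dx dt ≤ C`. -/
theorem stmt_13 {d n : ℕ} (Ω : Set (Fin d → ℝ)) (hΩo : IsOpen Ω)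
    (hΩb : Bornology.IsBounded Ω) (T : ℝ) (hT : 0 < T)
    (π : Fin n → ℝ) (hπ : ∀ i, 0 < π i) (η : ℝ) (hη : 0 < η) :
    ∃ C : ℝ, 0 < C ∧
      ∀ u : ℝ → (Fin d → ℝ) → Fin n → ℝ,
        Measurable (Function.uncurry u) →
        (∀ t x i, 0 < u t x i) →
        IntegrableOn
          (fun p : ℝ × (Fin d → ℝ) =>
            ∑ i, π i * (u p.1 p.2 i * (Real.log (u p.1 p.2 i) - 1) + 1))
          ((Set.Ioo 0 T) ×ˢ Ω) →
        (Real.sqrt (∫ t in Set.Ioo 0 T, ∑ i,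
              (∫ x in Ω, π i * (u t x i / (1 + u t x i ^ ((1 : ℝ) / 2 + η)))
                  * Real.log (u t x i)) ^ 2)
            ≤ C * (1 + ∫ t in Set.Ioo 0 T, ∫ x in Ω,
                ∑ i, π i * (u t x i * (Real.log (u t x i) - 1) + 1))) ∧
        ((∫ t in Set.Ioo 0 T, ∑ i, ∫ x in Ω,
              π i * (u t x i / (1 + u t x i ^ ((1 : ℝ) / 2 + η))) ^ 2 / u t x i)
            ≤ C) := by
  -- basic constants
  have hVfin : volume Ω < ⊤ := hΩb.measure_lt_top
  set V : ℝ := (volume Ω).toReal with hVdef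
  have hV0 : 0 ≤ V := ENNReal.toReal_nonneg
  set P : ℝ := 1 + ∑ i, π i with hPdef
  have hP1 : 1 ≤ P := le_add_of_nonneg_right (Finset.sum_nonneg fun i _ => (hπ i).le)
  have hπP : ∀ i, π i ≤ P := fun i => by
    have := Finset.single_le_sum (f := π) (fun j _ => (hπ j).le) (Finset.mem_univ i)
    linarith
  set Q : ℝ := 1 + ∑ i, (π i)⁻¹ with hQdef
  have hQ1 : 1 ≤ Q := le_add_of_nonneg_right (Finset.sum_nonneg fun i _ => inv_nonneg.2 (hπ i).le)
  have hπQ : ∀ i, (π i)⁻¹ ≤ Q := fun i => by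
    have := Finset.single_le_sum (f := fun j => (π j)⁻¹)
      (fun j _ => inv_nonneg.2 (hπ j).le) (Finset.mem_univ i)
    linarith
  set A : ℝ := 1 + Real.exp 2 / η with hAdef
  have hA0 : 0 < A := by positivity
  set B : ℝ := 1/η with hBdef
  have hB0 : 0 < B := by positivity
  have hPpos : (0:ℝ) < P := by linarith
  set K1 : ℝ := P^2 * A with hK1def
  have hK10 : 0 < K1 := mul_pos (pow_pos hPpos 2) hA0
  set K2 : ℝ := P^2 * B * Q with hK2def
  have hK20 : 0 < K2 := mul_pos (mul_pos (pow_pos hPpos 2) hB0) (lt_of_lt_of_le one_pos hQ1)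
  set M1 : ℝ := n * K1 * V^2 with hM1def
  have hM10 : 0 ≤ M1 := by positivity
  set M2 : ℝ := n * V * K2 with hM2def
  have hM20 : 0 ≤ M2 := by positivity
  set D : ℝ := (∑ i, π i) * V with hDdef
  have hD0 : 0 ≤ D := mul_nonneg (Finset.sum_nonneg fun i _ => (hπ i).le) hV0
  refine ⟨max (Real.sqrt (M1 * T + M2)) (D * T) + 1, ?_, ?_⟩
  · have := le_max_left (Real.sqrt (M1 * T + M2)) (D * T)
    nlinarith [Real.sqrt_nonneg (M1 * T + M2)]
  intro u hu hupos hint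
  -- volume of time interval
  have hIoo_fin : volume (Set.Ioo (0:ℝ) T) < ⊤ := by
    rw [Real.volume_Ioo]; exact ENNReal.ofReal_lt_top
  have hIoo_toReal : (volume (Set.Ioo (0:ℝ) T)).toReal = T := by
    rw [Real.volume_Ioo, sub_zero, ENNReal.toReal_ofReal hT.le]
  -- product structure of the integrability assumption
  have hintP : Integrable
      (fun p : ℝ × (Fin d → ℝ) =>
        ∑ i, π i * (u p.1 p.2 i * (Real.log (u p.1 p.2 i) - 1) + 1))
      ((volume.restrict (Set.Ioo 0 T)).prod (volume.restrict Ω)) := by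
    rw [Measure.prod_restrict, ← Measure.volume_eq_prod]; exact hint
  have hslice := hintP.prod_right_ae
  have hGint : Integrable
      (fun t => ∫ x in Ω, ∑ i, π i * (u t x i * (Real.log (u t x i) - 1) + 1))
      (volume.restrict (Set.Ioo 0 T)) := hintP.integral_prod_left
  set G : ℝ → ℝ :=
    fun t => ∫ x in Ω, ∑ i, π i * (u t x i * (Real.log (u t x i) - 1) + 1) with hGdef
  have hG0 : ∀ t, 0 ≤ G t := fun t => integral_nonneg fun x =>
    Finset.sum_nonneg fun i _ => mul_nonneg (hπ i).le (aux_ell_nonneg (hupos t x i))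
  set Htot : ℝ := ∫ t in Set.Ioo 0 T, G t with hHtotdef
  have hHtot0 : 0 ≤ Htot := integral_nonneg fun t => hG0 t
  have hμΩuniv : ((volume.restrict Ω) Set.univ).toReal = V := by
    rw [Measure.restrict_apply_univ]
  haveI hfinΩ : IsFiniteMeasure (volume.restrict Ω) :=
    ⟨by rwa [Measure.restrict_apply_univ]⟩
  constructor
  · -- part (i)
    set F : ℝ → ℝ := fun t => ∑ i, (∫ x in Ω,
      π i * (u t x i / (1 + u t x i ^ ((1:ℝ)/2 + η))) * Real.log (u t x i)) ^ 2 with hFdef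
    have hF0 : ∀ t, 0 ≤ F t := fun t => Finset.sum_nonneg fun i _ => sq_nonneg _
    have hFbound : ∀ᵐ t ∂(volume.restrict (Set.Ioo 0 T)), F t ≤ M1 + M2 * G t := by
      filter_upwards [hslice] with t ht
      have htI : Integrable (fun x => ∑ i, π i * (u t x i * (Real.log (u t x i) - 1) + 1))
          (volume.restrict Ω) := ht
      have hmes : ∀ i, Measurable fun x : Fin d → ℝ => u t x i := fun i =>
        (measurable_pi_apply i).comp (hu.comp measurable_prodMk_left)
      -- pointwise bound on the square of the integrand
      have hptw : ∀ (i : Fin n) (x : Fin d → ℝ),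
          (π i * (u t x i / (1 + u t x i ^ ((1:ℝ)/2 + η))) * Real.log (u t x i)) ^ 2
            ≤ K1 + K2 * ∑ j, π j * (u t x j * (Real.log (u t x j) - 1) + 1) := by
        intro i x
        have hb := aux_sq_bound hη (hupos t x i)
        have hl := aux_ell_nonneg (hupos t x i)
        have hS0 : 0 ≤ ∑ j, π j * (u t x j * (Real.log (u t x j) - 1) + 1) :=
          Finset.sum_nonneg fun j _ => mul_nonneg (hπ j).le (aux_ell_nonneg (hupos t x j))
        have hsingle : π i * (u t x i * (Real.log (u t x i) - 1) + 1)
            ≤ ∑ j, π j * (u t x j * (Real.log (u t x j) - 1) + 1) :=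
          Finset.single_le_sum
            (fun j _ => mul_nonneg (hπ j).le (aux_ell_nonneg (hupos t x j))) (Finset.mem_univ i)
        have e1 : (π i * (u t x i / (1 + u t x i ^ ((1:ℝ)/2 + η))) * Real.log (u t x i)) ^ 2
            = (π i)^2 * (u t x i / (1 + u t x i ^ ((1:ℝ)/2 + η)) * Real.log (u t x i)) ^ 2 := by
          ring
        have hb' : (u t x i / (1 + u t x i ^ ((1:ℝ)/2 + η)) * Real.log (u t x i)) ^ 2
            ≤ A + B * (u t x i * (Real.log (u t x i) - 1) + 1) := by
          rw [hAdef, hBdef]; exact hb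
        rw [e1, hK1def, hK2def]
        exact aux_combine (hπ i) (hπP i) hP1 hQ1 hA0 hB0 hl hS0 hsingle hb'
      -- measurability of the integrands
      have hfmes : ∀ i : Fin n, Measurable fun x : Fin d → ℝ =>
          π i * (u t x i / (1 + u t x i ^ ((1:ℝ)/2 + η))) * Real.log (u t x i) := by
        intro i
        have hr : Measurable fun x : Fin d → ℝ => u t x i ^ ((1:ℝ)/2 + η) :=
          (Real.continuous_rpow_const (by positivity)).measurable.comp (hmes i)
        exact ((measurable_const.mul ((hmes i).div (measurable_const.add hr))).mul
          (Real.measurable_log.comp (hmes i)))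
      -- integrability of squares
      have hgint : Integrable (fun x => K1 + K2 *
          ∑ j, π j * (u t x j * (Real.log (u t x j) - 1) + 1)) (volume.restrict Ω) :=
        (integrable_const K1).add (htI.const_mul K2)
      have hfi2int : ∀ i : Fin n, Integrable (fun x =>
          (π i * (u t x i / (1 + u t x i ^ ((1:ℝ)/2 + η))) * Real.log (u t x i)) ^ 2)
          (volume.restrict Ω) := by
        intro i
        refine Integrable.mono' hgint ((hfmes i).pow_const 2).aestronglyMeasurable ?_
        filter_upwards with x
        rw [Real.norm_eq_abs, abs_of_nonneg (sq_nonneg _)]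
        exact hptw i x
      have hfiint : ∀ i : Fin n, Integrable (fun x =>
          π i * (u t x i / (1 + u t x i ^ ((1:ℝ)/2 + η))) * Real.log (u t x i))
          (volume.restrict Ω) := by
        intro i
        have hmaj : Integrable (fun x => (1 +
            (π i * (u t x i / (1 + u t x i ^ ((1:ℝ)/2 + η))) * Real.log (u t x i)) ^ 2) / 2)
            (volume.restrict Ω) := ((integrable_const (1:ℝ)).add (hfi2int i)).div_const 2
        refine Integrable.mono' hmaj (hfmes i).aestronglyMeasurable ?_
        filter_upwards with x
        rw [Real.norm_eq_abs]
        set a := π i * (u t x i / (1 + u t x i ^ ((1:ℝ)/2 + η))) * Real.log (u t x i) with ha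
        have h := sq_abs a
        nlinarith [sq_nonneg (|a| - 1), abs_nonneg a]
      -- Cauchy–Schwarz per component
      have hcs : ∀ i : Fin n,
          (∫ x in Ω, π i * (u t x i / (1 + u t x i ^ ((1:ℝ)/2 + η))) * Real.log (u t x i)) ^ 2
            ≤ V * ∫ x in Ω,
              (π i * (u t x i / (1 + u t x i ^ ((1:ℝ)/2 + η))) * Real.log (u t x i)) ^ 2 := by
        intro i
        have := aux_cs (volume.restrict Ω) (hfiint i) (hfi2int i)
        rwa [hμΩuniv] at this
      -- sum up
      have hsumint : Integrable (fun x => ∑ i,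
          (π i * (u t x i / (1 + u t x i ^ ((1:ℝ)/2 + η))) * Real.log (u t x i)) ^ 2)
          (volume.restrict Ω) := integrable_finset_sum _ fun i _ => hfi2int i
      have hbnd2 : Integrable (fun x => (n : ℝ) * K1 + ((n : ℝ) * K2) *
          ∑ j, π j * (u t x j * (Real.log (u t x j) - 1) + 1)) (volume.restrict Ω) :=
        (integrable_const _).add (htI.const_mul _)
      have hIle : (∫ x in Ω, ∑ i,
            (π i * (u t x i / (1 + u t x i ^ ((1:ℝ)/2 + η))) * Real.log (u t x i)) ^ 2)
          ≤ ∫ x in Ω, ((n : ℝ) * K1 + ((n : ℝ) * K2) *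
            ∑ j, π j * (u t x j * (Real.log (u t x j) - 1) + 1)) := by
        refine integral_mono hsumint hbnd2 fun x => ?_
        have h := Finset.sum_le_sum (fun i (_ : i ∈ Finset.univ) => hptw i x)
        have hcard : ∑ _i : Fin n, (K1 + K2 *
            ∑ j, π j * (u t x j * (Real.log (u t x j) - 1) + 1))
            = (n : ℝ) * K1 + ((n : ℝ) * K2) *
              ∑ j, π j * (u t x j * (Real.log (u t x j) - 1) + 1) := by
          rw [Finset.sum_const, Finset.card_univ, Fintype.card_fin, nsmul_eq_mul]
          ring
        calc (∑ i, (π i * (u t x i / (1 + u t x i ^ ((1:ℝ)/2 + η))) * Real.log (u t x i)) ^ 2)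
            ≤ ∑ _i : Fin n, (K1 + K2 *
                ∑ j, π j * (u t x j * (Real.log (u t x j) - 1) + 1)) := h
          _ = _ := hcard
      have hRHSval : (∫ x in Ω, ((n : ℝ) * K1 + ((n : ℝ) * K2) *
            ∑ j, π j * (u t x j * (Real.log (u t x j) - 1) + 1)))
          = (n : ℝ) * K1 * V + (n : ℝ) * K2 * G t := by
        rw [integral_add (integrable_const _) (htI.const_mul _), setIntegral_const, measureReal_def,
          MeasureTheory.integral_const_mul, smul_eq_mul, hGdef]
        ring
      have hFsum : F t ≤ V * ((n : ℝ) * K1 * V + (n : ℝ) * K2 * G t) := by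
        rw [hFdef]
        calc (∑ i, (∫ x in Ω,
              π i * (u t x i / (1 + u t x i ^ ((1:ℝ)/2 + η))) * Real.log (u t x i)) ^ 2)
            ≤ ∑ i, V * ∫ x in Ω,
              (π i * (u t x i / (1 + u t x i ^ ((1:ℝ)/2 + η))) * Real.log (u t x i)) ^ 2 :=
              Finset.sum_le_sum fun i _ => hcs i
          _ = V * ∑ i, ∫ x in Ω,
              (π i * (u t x i / (1 + u t x i ^ ((1:ℝ)/2 + η))) * Real.log (u t x i)) ^ 2 := by
              rw [Finset.mul_sum]
          _ = V * ∫ x in Ω, ∑ i,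
              (π i * (u t x i / (1 + u t x i ^ ((1:ℝ)/2 + η))) * Real.log (u t x i)) ^ 2 := by
              rw [integral_finset_sum _ fun i _ => hfi2int i]
          _ ≤ V * ((n : ℝ) * K1 * V + (n : ℝ) * K2 * G t) := by
              rw [← hRHSval]
              exact mul_le_mul_of_nonneg_left hIle hV0
      have : M1 + M2 * G t = V * ((n : ℝ) * K1 * V + (n : ℝ) * K2 * G t) := by
        rw [hM1def, hM2def]; ring
      linarith
    -- integrate in time
    have hFint : (∫ t in Set.Ioo 0 T, F t) ≤ M1 * T + M2 * Htot := by
      have h1 : (∫ t in Set.Ioo 0 T, F t) ≤ ∫ t in Set.Ioo 0 T, (M1 + M2 * G t) :=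
        integral_mono_of_nonneg (Filter.Eventually.of_forall fun t => hF0 t)
          ((integrable_const M1).add (hGint.const_mul M2)) hFbound
      have h2 : (∫ t in Set.Ioo 0 T, (M1 + M2 * G t)) = M1 * T + M2 * Htot := by
        rw [integral_add (integrable_const M1) (hGint.const_mul M2), setIntegral_const,
          MeasureTheory.integral_const_mul, measureReal_def, hIoo_toReal, smul_eq_mul, hHtotdef]
        ring
      linarith
    -- square-root chain
    have hQ2 : M1 * T + M2 * Htot ≤ (M1 * T + M2) * (1 + Htot) ^ 2 := by
      nlinarith [mul_nonneg (mul_nonneg hM10 hT.le) hHtot0, mul_nonneg hM20 hHtot0,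
        mul_nonneg (mul_nonneg (mul_nonneg hM10 hT.le) hHtot0) hHtot0,
        mul_nonneg (mul_nonneg hM20 hHtot0) hHtot0, mul_nonneg hM10 hT.le, hM20]
    have hsq0 : (0:ℝ) ≤ M1 * T + M2 := by nlinarith [mul_nonneg hM10 hT.le, hM20]
    have hfinal : Real.sqrt (∫ t in Set.Ioo 0 T, F t)
        ≤ (max (Real.sqrt (M1 * T + M2)) (D * T) + 1) * (1 + Htot) := by
      calc Real.sqrt (∫ t in Set.Ioo 0 T, F t)
          ≤ Real.sqrt ((M1 * T + M2) * (1 + Htot) ^ 2) := Real.sqrt_le_sqrt (by linarith)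
        _ = Real.sqrt (M1 * T + M2) * (1 + Htot) := by
            rw [Real.sqrt_mul hsq0, Real.sqrt_sq (by linarith : (0:ℝ) ≤ 1 + Htot)]
        _ ≤ (max (Real.sqrt (M1 * T + M2)) (D * T) + 1) * (1 + Htot) := by
            apply mul_le_mul_of_nonneg_right _ (by linarith)
            have := le_max_left (Real.sqrt (M1 * T + M2)) (D * T)
            linarith
    exact hfinal
  · -- part (ii)
    have hbound : ∀ t : ℝ,
        ‖∑ i, ∫ x in Ω, π i * (u t x i / (1 + u t x i ^ ((1:ℝ)/2 + η)))^2 / u t x i‖ ≤ D := by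
      intro t
      have hi : ∀ i : Fin n,
          ‖∫ x in Ω, π i * (u t x i / (1 + u t x i ^ ((1:ℝ)/2 + η)))^2 / u t x i‖ ≤ π i * V := by
        intro i
        refine norm_setIntegral_le_of_norm_le_const hVfin ?_
        intro x hx
        have hb := aux_s_sq_div hη (hupos t x i)
        have hup := hupos t x i
        have h0 : 0 ≤ π i * (u t x i / (1 + u t x i ^ ((1:ℝ)/2 + η)))^2 / u t x i := by
          have h1 := (hπ i).le
          positivity
        rw [Real.norm_eq_abs, abs_of_nonneg h0]
        calc π i * (u t x i / (1 + u t x i ^ ((1:ℝ)/2 + η)))^2 / u t x i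
            = π i * ((u t x i / (1 + u t x i ^ ((1:ℝ)/2 + η)))^2 / u t x i) := by ring
          _ ≤ π i * 1 := mul_le_mul_of_nonneg_left hb (hπ i).le
          _ = π i := mul_one _
      calc ‖∑ i, ∫ x in Ω, π i * (u t x i / (1 + u t x i ^ ((1:ℝ)/2 + η)))^2 / u t x i‖
          ≤ ∑ i, ‖∫ x in Ω, π i * (u t x i / (1 + u t x i ^ ((1:ℝ)/2 + η)))^2 / u t x i‖ :=
            norm_sum_le _ _
        _ ≤ ∑ i, π i * V := Finset.sum_le_sum fun i _ => hi i
        _ = D := by rw [hDdef, Finset.sum_mul]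
    have hmain := norm_setIntegral_le_of_norm_le_const hIoo_fin
      (fun t _ => hbound t)
    rw [measureReal_def, hIoo_toReal] at hmain
    have h1 : (∫ t in Set.Ioo 0 T, ∑ i, ∫ x in Ω,
          π i * (u t x i / (1 + u t x i ^ ((1:ℝ)/2 + η)))^2 / u t x i)
        ≤ D * T := le_trans (le_abs_self _) hmain
    have h2 := le_max_right (Real.sqrt (M1 * T + M2)) (D * T)
    linarith
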